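/- (Optimality characterization for the unitary Procrustes problem underlying piDMD, formula (2.8).) Let n, m be positive integers and X_1, X_2 ∈ ℂ^{n×m}. Suppose W ∈ ℂ^{n×n} is unitary and the matrix W X_1 X_2* is Hermitian positive semidefinite. Then for every unitary matrix L ∈ ℂ^{n×n}, ‖X_2 − W X_1‖_F ≤ ‖X_2 − L X_1‖_F. -/

import Mathlib

open Matrix
open scoped ComplexOrder

/-- The Frobenius norm of a complex matrix: `‖M‖_F = (∑_{i,j} |M_{i,j}|²)^{1/2}`. -/
noncomputable def frobNorm {n m : ℕ} (M : Matrix (Fin n) (Fin m) ℂ) : ℝ :=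
  Real.sqrt (∑ i, ∑ j, ‖M i j‖ ^ 2)

lemma trace_self_mul_conjTranspose_re {n m : ℕ} (M : Matrix (Fin n) (Fin m) ℂ) :
    (Matrix.trace (M * Mᴴ)).re = ∑ i, ∑ j, ‖M i j‖ ^ 2 := by
  simp only [Matrix.trace, Matrix.diag, Matrix.mul_apply, Matrix.conjTranspose_apply,
    Complex.re_sum]
  refine Finset.sum_congr rfl fun i _ => Finset.sum_congr rfl fun j _ => ?_
  rw [show star (M i j) = (starRingEnd ℂ) (M i j) from rfl, Complex.mul_conj,
    Complex.ofReal_re, Complex.sq_norm]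

lemma trace_self_mul_conjTranspose_re_nonneg {n m : ℕ} (M : Matrix (Fin n) (Fin m) ℂ) :
    0 ≤ (Matrix.trace (M * Mᴴ)).re := by
  rw [trace_self_mul_conjTranspose_re]
  positivity

open scoped MatrixOrder in
lemma re_trace_unitary_mul_le {n : ℕ} (P U : Matrix (Fin n) (Fin n) ℂ)
    (hP : P.PosSemidef) (hU : Uᴴ * U = 1) :
    (Matrix.trace (U * P)).re ≤ (Matrix.trace P).re := by
  set S := CFC.sqrt P with hS
  have hSS : S * S = P := CFC.sqrt_mul_sqrt_self P hP.nonneg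
  have hSH : Sᴴ = S := (CFC.sqrt_nonneg P).posSemidef.1
  set M : Matrix (Fin n) (Fin n) ℂ := S - U * S with hM
  have h0 : 0 ≤ (Matrix.trace (Mᴴ * M)).re := by
    have := trace_self_mul_conjTranspose_re_nonneg Mᴴ
    rwa [conjTranspose_conjTranspose] at this
  have hMH : Mᴴ = S - S * Uᴴ := by
    rw [hM, conjTranspose_sub, conjTranspose_mul, hSH]
  have hexp0 : Mᴴ * M = S * S + S * Uᴴ * U * S - S * U * S - S * Uᴴ * S := by
    rw [hMH, hM]; noncomm_ring
  have hexp : Mᴴ * M = P + P - S * U * S - S * Uᴴ * S := by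
    rw [hexp0, Matrix.mul_assoc S Uᴴ U, hU, Matrix.mul_one, hSS]
  have ht1 : Matrix.trace (S * U * S) = Matrix.trace (U * P) := by
    rw [← hSS, Matrix.mul_assoc, Matrix.trace_mul_comm, Matrix.mul_assoc]
  have ht2 : (Matrix.trace (S * Uᴴ * S)).re = (Matrix.trace (U * P)).re := by
    have h1 : Matrix.trace (S * Uᴴ * S) = Matrix.trace (Uᴴ * P) := by
      rw [← hSS, Matrix.mul_assoc, Matrix.trace_mul_comm, Matrix.mul_assoc]
    have h2 : (Uᴴ * P)ᴴ = P * U := by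
      rw [conjTranspose_mul, conjTranspose_conjTranspose, hP.1]
    have h3 : Matrix.trace (Uᴴ * P) = star (Matrix.trace (P * U)) := by
      rw [← h2, Matrix.trace_conjTranspose, star_star]
    rw [h1, h3, Matrix.trace_mul_comm]
    simp [Complex.star_def]
  rw [hexp] at h0
  simp only [Matrix.trace_sub, Matrix.trace_add, Complex.sub_re, Complex.add_re,
    ht1] at h0
  rw [ht2] at h0
  linarith

theorem unitary_procrustes_optimality (n m : ℕ)
    (X1 X2 : Matrix (Fin n) (Fin m) ℂ)
    (W : Matrix (Fin n) (Fin n) ℂ) (hW₁ : Wᴴ * W = 1) (hW₂ : W * Wᴴ = 1)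
    (hpsd : (W * X1 * X2ᴴ).PosSemidef) :
    ∀ L : Matrix (Fin n) (Fin n) ℂ, Lᴴ * L = 1 → L * Lᴴ = 1 →
      frobNorm (X2 - W * X1) ≤ frobNorm (X2 - L * X1) := by
  intro L hL₁ hL₂
  -- expansion of the squared Frobenius norm
  have key : ∀ (K : Matrix (Fin n) (Fin n) ℂ), Kᴴ * K = 1 →
      (∑ i, ∑ j, ‖(X2 - K * X1) i j‖ ^ 2)
      = (Matrix.trace (X2 * X2ᴴ)).re + (Matrix.trace (X1 * X1ᴴ)).re
        - 2 * (Matrix.trace (K * X1 * X2ᴴ)).re := by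
    intro K hK
    rw [← trace_self_mul_conjTranspose_re]
    have hexp : (X2 - K * X1) * (X2 - K * X1)ᴴ
        = X2 * X2ᴴ + K * X1 * X1ᴴ * Kᴴ - X2 * (X1ᴴ * Kᴴ) - K * X1 * X2ᴴ := by
      rw [conjTranspose_sub, conjTranspose_mul, Matrix.sub_mul, Matrix.mul_sub,
        Matrix.mul_sub, ← Matrix.mul_assoc (K * X1) X1ᴴ Kᴴ]
      abel
    rw [hexp]
    have h1 : Matrix.trace (K * X1 * X1ᴴ * Kᴴ) = Matrix.trace (X1 * X1ᴴ) := by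
      rw [Matrix.trace_mul_comm, ← Matrix.mul_assoc, ← Matrix.mul_assoc, hK,
        Matrix.one_mul]
    have h2 : (Matrix.trace (X2 * (X1ᴴ * Kᴴ))).re = (Matrix.trace (K * X1 * X2ᴴ)).re := by
      have : (X2 * (X1ᴴ * Kᴴ))ᴴ = K * X1 * X2ᴴ := by
        simp [conjTranspose_mul, Matrix.mul_assoc]
      rw [← conjTranspose_conjTranspose (X2 * (X1ᴴ * Kᴴ)), this,
        Matrix.trace_conjTranspose]
      simp [Complex.star_def]
    simp only [Matrix.trace_sub, Matrix.trace_add, Complex.sub_re, Complex.add_re, h1]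
    rw [h2]
    ring
  -- compare traces
  have hcomp : (Matrix.trace (L * X1 * X2ᴴ)).re ≤ (Matrix.trace (W * X1 * X2ᴴ)).re := by
    have hU : (L * Wᴴ)ᴴ * (L * Wᴴ) = 1 := by
      rw [conjTranspose_mul, conjTranspose_conjTranspose, Matrix.mul_assoc,
        ← Matrix.mul_assoc Lᴴ L Wᴴ, hL₁, Matrix.one_mul, hW₂]
    have hUP : (L * Wᴴ) * (W * X1 * X2ᴴ) = L * X1 * X2ᴴ := by
      simp only [← Matrix.mul_assoc]
      rw [Matrix.mul_assoc L Wᴴ W, hW₁, Matrix.mul_one]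
    have := re_trace_unitary_mul_le (W * X1 * X2ᴴ) (L * Wᴴ) hpsd hU
    rwa [hUP] at this
  unfold frobNorm
  apply Real.sqrt_le_sqrt
  rw [key W hW₁, key L hL₁]
  linarith
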